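/- Let C_X ∈ ℝ^{N×N} be CPD and K ∈ ℝ_{>0}^{N×N} be such that log K (entrywise) is CPD, with both symmetric. Then the function T ↦ −Tr(C_X Tᵀ log(K) T) is concave on the set of couplings U(1_N/N, 1_N/N) = {T ∈ ℝ_+^{N×N} : T 1_N = Tᵀ 1_N = (1/N) 1_N}. -/

import Mathlib

open Matrix
open scoped MatrixOrder

lemma key_nonneg {N : ℕ} (CX L : Matrix (Fin N) (Fin N) ℝ)
    (hCXsym : CXᵀ = CX)
    (hCXcpd : ∀ x : Fin N → ℝ, (∑ i, x i) = 0 → 0 ≤ x ⬝ᵥ CX.mulVec x)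
    (hLcpd : ∀ x : Fin N → ℝ, (∑ i, x i) = 0 → 0 ≤ x ⬝ᵥ L.mulVec x)
    (U : Matrix (Fin N) (Fin N) ℝ)
    (hrow : ∀ i, ∑ j, U i j = 0) (hcol : ∀ j, ∑ i, U i j = 0) :
    0 ≤ trace (CX * Uᵀ * L * U) := by
  have hUT1 : Uᵀ *ᵥ (fun _ => (1:ℝ)) = 0 := by
    funext j; simp [mulVec, dotProduct, transpose_apply, hcol j]
  set P : Matrix (Fin N) (Fin N) ℝ := U * CX * Uᵀ with hPdef
  have hCXH : CXᴴ = CX := by rw [conjTranspose_eq_transpose_of_trivial]; exact hCXsym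
  have hPherm : P.IsHermitian := by
    unfold Matrix.IsHermitian
    simp [hPdef, conjTranspose_mul, Matrix.mul_assoc, hCXH, hCXsym]
  have hP : P.PosSemidef := by
    refine PosSemidef.of_dotProduct_mulVec_nonneg hPherm fun x => ?_
    have h1 : star x ⬝ᵥ P *ᵥ x = (Uᵀ *ᵥ x) ⬝ᵥ CX *ᵥ (Uᵀ *ᵥ x) := by
      rw [star_trivial, hPdef, ← mulVec_mulVec, ← mulVec_mulVec,
        dotProduct_mulVec, ← mulVec_transpose]
    rw [h1]
    apply hCXcpd
    simp only [mulVec, dotProduct, transpose_apply]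
    rw [Finset.sum_comm]
    simp only [← Finset.sum_mul]
    simp [hrow]
  set S := CFC.sqrt P with hSdef
  have hSsq : S * S = P := CFC.sqrt_mul_sqrt_self P hP.nonneg
  have hSsym : Sᵀ = S := by
    have := (CFC.sqrt_nonneg P).posSemidef.1
    exact (by simpa [conjTranspose] using this : (CFC.sqrt P).IsSymm)
  have hsym' : ∀ a b, S a b = S b a := fun a b => by
    have h := congrFun (congrFun hSsym a) b
    rw [transpose_apply] at h
    exact h.symm
  have hP1 : P *ᵥ (fun _ => (1:ℝ)) = 0 := by
    simp [hPdef, ← mulVec_mulVec, hUT1]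
  have hS1 : S *ᵥ (fun _ => (1:ℝ)) = 0 := by
    have h0 : (S *ᵥ (fun _ => (1:ℝ))) ⬝ᵥ (S *ᵥ (fun _ => (1:ℝ))) = 0 := by
      rw [dotProduct_mulVec, ← mulVec_transpose, hSsym, mulVec_mulVec, hSsq, hP1]
      simp
    exact dotProduct_self_eq_zero.mp h0
  have htr : trace (CX * Uᵀ * L * U) = trace (S * L * S) := by
    rw [show CX * Uᵀ * L * U = (CX * Uᵀ * L) * U from by rw [Matrix.mul_assoc]]
    rw [trace_mul_comm]
    rw [show U * (CX * Uᵀ * L) = P * L from by simp [hPdef, Matrix.mul_assoc]]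
    rw [← hSsq, Matrix.mul_assoc, trace_mul_comm, Matrix.mul_assoc]
  rw [htr, trace]
  apply Finset.sum_nonneg
  intro i _
  have hri : ∑ j, S i j = 0 := by
    have := congrFun hS1 i
    simpa [mulVec, dotProduct] using this
  calc (0:ℝ) ≤ (fun j => S i j) ⬝ᵥ L *ᵥ (fun j => S i j) := hLcpd _ hri
    _ = diag (S * L * S) i := by
        simp only [diag_apply, Matrix.mul_apply, dotProduct, mulVec,
          Finset.mul_sum, Finset.sum_mul]
        rw [Finset.sum_comm]
        refine Finset.sum_congr rfl fun x _ => Finset.sum_congr rfl fun j _ => ?_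
        rw [hsym' x i]; ring

/-- with `C_X` CPD and `log K` CPD (entrywise log, `K > 0`), the map
`T ↦ −Tr(C_X Tᵀ log(K) T)` is concave on the coupling polytope `U(1/N, 1/N)`. -/
theorem stmt18 {N : ℕ} (CX K : Matrix (Fin N) (Fin N) ℝ)
    (hCXsym : CXᵀ = CX) (hKsym : Kᵀ = K) (hKpos : ∀ i j, 0 < K i j)
    (hCXcpd : ∀ x : Fin N → ℝ, (∑ i, x i) = 0 → 0 ≤ x ⬝ᵥ CX.mulVec x)
    (hlogKcpd : ∀ x : Fin N → ℝ, (∑ i, x i) = 0 →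
      0 ≤ x ⬝ᵥ (Matrix.of fun i j => Real.log (K i j)).mulVec x) :
    ConcaveOn ℝ
      {T : Matrix (Fin N) (Fin N) ℝ | (∀ i j, 0 ≤ T i j) ∧
        (∀ i, ∑ j, T i j = (N : ℝ)⁻¹) ∧ ∀ j, ∑ i, T i j = (N : ℝ)⁻¹}
      (fun T => -Matrix.trace (CX * Tᵀ * (Matrix.of fun i j => Real.log (K i j)) * T)) := by
  set L : Matrix (Fin N) (Fin N) ℝ := Matrix.of fun i j => Real.log (K i j) with hLdef
  set B : Matrix (Fin N) (Fin N) ℝ → Matrix (Fin N) (Fin N) ℝ → ℝ :=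
    fun S T => trace (CX * Sᵀ * L * T) with hBdef
  constructor
  · -- convexity of the set
    intro T hT T' hT' a b ha hb hab
    refine ⟨fun i j => ?_, fun i => ?_, fun j => ?_⟩
    · simp only [Matrix.add_apply, Matrix.smul_apply, smul_eq_mul]
      exact add_nonneg (mul_nonneg ha (hT.1 i j)) (mul_nonneg hb (hT'.1 i j))
    · simp only [Matrix.add_apply, Matrix.smul_apply, smul_eq_mul,
        Finset.sum_add_distrib, ← Finset.mul_sum, hT.2.1 i, hT'.2.1 i]
      rw [← add_mul, hab, one_mul]
    · simp only [Matrix.add_apply, Matrix.smul_apply, smul_eq_mul,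
        Finset.sum_add_distrib, ← Finset.mul_sum, hT.2.2 j, hT'.2.2 j]
      rw [← add_mul, hab, one_mul]
  · intro T hT T' hT' a b ha hb hab
    have hexp : trace (CX * (a • T + b • T')ᵀ * L * (a • T + b • T')) =
        a * a * B T T + a * b * B T T' + b * a * B T' T + b * b * B T' T' := by
      simp only [hBdef, transpose_add, transpose_smul, Matrix.mul_add,
        Matrix.add_mul, Matrix.mul_smul, Matrix.smul_mul, trace_add, trace_smul,
        smul_eq_mul]
      ring
    have hdiff : trace (CX * (T - T')ᵀ * L * (T - T')) =
        B T T - B T T' - B T' T + B T' T' := by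
      simp only [hBdef, transpose_sub, Matrix.mul_sub, Matrix.sub_mul, trace_sub]
      ring
    have hkey : 0 ≤ trace (CX * (T - T')ᵀ * L * (T - T')) := by
      apply key_nonneg CX L hCXsym hCXcpd hlogKcpd
      · intro i
        simp only [Matrix.sub_apply, Finset.sum_sub_distrib, hT.2.1 i, hT'.2.1 i,
          sub_self]
      · intro j
        simp only [Matrix.sub_apply, Finset.sum_sub_distrib, hT.2.2 j, hT'.2.2 j,
          sub_self]
    rw [hdiff] at hkey
    simp only [smul_eq_mul, hexp]
    have hBT : trace (CX * Tᵀ * L * T) = B T T := rfl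
    have hBT' : trace (CX * T'ᵀ * L * T') = B T' T' := rfl
    rw [hBT, hBT']
    have hb' : b = 1 - a := by linarith
    subst hb'
    nlinarith [mul_nonneg (mul_nonneg ha hb) hkey]
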